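/- arXiv:2601.13026 — 8 statements merged into one kernel-verified Lean document; each statement's English description precedes it below -/
import Mathlib

section
/- For any admissible policy π with occupancy measures x^a_p(π) satisfying Σ_a x^a_p(π)(I - βP^a) = p, and any stationary deterministic policy S with cost vector F(S), the following decomposition identity holds: F_p(S) + Σ_{a < a'} Σ_{j ∈ S_{a'}} f_j^{a,a'}(S) x_{pj}^{a}(π) = F_p(π) + Σ_{a' < a} Σ_{j ∈ S_{a'}} f_j^{a',a}(S) x_{pj}^{a}(π), where F_p(π) = Σ_a x_p^a(π) · h^a and F_p(S) = p · F(S). -/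
open Matrix

/-- Lemma 4.1(a) (performance metric decomposition): for any occupancy measures
`x^a` satisfying `Σ_a x^a (I - βP^a) = p`, and any stationary deterministic
policy `σ` with cost vector `F`,
`F_p(S) + Σ_{a<a'} Σ_{j∈S_{a'}} f_j^{a,a'}(S) x_j^a
  = F_p(π) + Σ_{a'<a} Σ_{j∈S_{a'}} f_j^{a',a}(S) x_j^a`. -/
theorem stmt7 {N : Type*} [Fintype N] [DecidableEq N] {A : ℕ}
    (P : Fin (A + 1) → Matrix N N ℝ)
    (hP0 : ∀ a i j, 0 ≤ P a i j) (hP1 : ∀ a i, ∑ j, P a i j = 1)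
    (β : ℝ) (hβ0 : 0 < β) (hβ1 : β < 1)
    (h : Fin (A + 1) → N → ℝ) (p : N → ℝ)
    (σ : N → Fin (A + 1)) (F : N → ℝ)
    (hF : ∀ i, F i = h (σ i) i + β * (P (σ i) *ᵥ F) i)
    (x : Fin (A + 1) → N → ℝ)
    (hflow : (∑ a, x a ᵥ* ((1 : Matrix N N ℝ) - β • P a)) = p) :
    p ⬝ᵥ F +
      ∑ a, ∑ a', (if a < a' then
        ∑ j ∈ Finset.univ.filter (fun j => σ j = a'),
          (h a j - h a' j + β * ((P a - P a') *ᵥ F) j) * x a j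
        else 0)
    =
    (∑ a, x a ⬝ᵥ h a) +
      ∑ a, ∑ a', (if a' < a then
        ∑ j ∈ Finset.univ.filter (fun j => σ j = a'),
          (h a' j - h a j + β * ((P a' - P a) *ᵥ F) j) * x a j
        else 0) := by
  classical
  set G : Fin (A + 1) → N → ℝ := fun a j => h a j + β * (P a *ᵥ F) j - F j with hG
  -- rewrite summands on the fibers
  have hfib : ∀ (a a' : Fin (A + 1)) (j : N), σ j = a' →
      (h a j - h a' j + β * ((P a - P a') *ᵥ F) j) = G a j := by
    intro a a' j hj
    have := hF j
    rw [hj] at this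
    simp only [hG, Matrix.sub_mulVec, Pi.sub_apply]
    linarith
  have claim1 : ∀ a a', (∑ j ∈ Finset.univ.filter (fun j => σ j = a'),
      (h a j - h a' j + β * ((P a - P a') *ᵥ F) j) * x a j)
      = ∑ j ∈ Finset.univ.filter (fun j => σ j = a'), G a j * x a j := by
    intro a a'
    refine Finset.sum_congr rfl ?_
    intro j hj
    rw [hfib a a' j (Finset.mem_filter.mp hj).2]
  have claim2 : ∀ a a', (∑ j ∈ Finset.univ.filter (fun j => σ j = a'),
      (h a' j - h a j + β * ((P a' - P a) *ᵥ F) j) * x a j)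
      = -∑ j ∈ Finset.univ.filter (fun j => σ j = a'), G a j * x a j := by
    intro a a'
    rw [← Finset.sum_neg_distrib]
    refine Finset.sum_congr rfl ?_
    intro j hj
    have h2 := hfib a a' j (Finset.mem_filter.mp hj).2
    simp only [Matrix.sub_mulVec, Pi.sub_apply] at h2 ⊢
    have h3 : h a' j - h a j + β * ((P a' *ᵥ F) j - (P a *ᵥ F) j) = -G a j := by linarith
    rw [h3]; ring
  simp only [claim1, claim2]
  -- diagonal terms vanish
  have hdiag : ∀ a, (∑ j ∈ Finset.univ.filter (fun j => σ j = a), G a j * x a j) = 0 := by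
    intro a
    refine Finset.sum_eq_zero ?_
    intro j hj
    have hj' := (Finset.mem_filter.mp hj).2
    have h2 := hF j
    rw [hj'] at h2
    have h3 : G a j = 0 := by simp only [hG]; linarith
    rw [h3, zero_mul]
  -- total sum over fibers
  have hsum : ∀ a, (∑ a', ∑ j ∈ Finset.univ.filter (fun j => σ j = a'), G a j * x a j)
      = ∑ j, G a j * x a j := by
    intro a
    exact Finset.sum_fiberwise (g := σ) (f := fun j => G a j * x a j) Finset.univ
  -- key evaluation via flow
  have hkey : ∀ a, (∑ j, G a j * x a j) = x a ⬝ᵥ h a - (x a ᵥ* ((1 : Matrix N N ℝ) - β • P a)) ⬝ᵥ F := by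
    intro a
    have hsm : x a ᵥ* (β • P a) = β • (x a ᵥ* P a) := by
      ext j
      simp only [Matrix.vecMul, dotProduct, Matrix.smul_apply, Pi.smul_apply, smul_eq_mul,
        Finset.mul_sum]
      exact Finset.sum_congr rfl fun i _ => by ring
    have h1 : (x a ᵥ* ((1 : Matrix N N ℝ) - β • P a)) ⬝ᵥ F
        = x a ⬝ᵥ F - β * (x a ⬝ᵥ (P a *ᵥ F)) := by
      rw [Matrix.vecMul_sub, Matrix.vecMul_one, sub_dotProduct,
        hsm, smul_dotProduct, smul_eq_mul, ← Matrix.dotProduct_mulVec]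
    rw [h1]
    simp only [hG, dotProduct, Finset.mul_sum, ← Finset.sum_sub_distrib]
    exact Finset.sum_congr rfl fun j _ => by ring
  have hflowF : (∑ a, (x a ᵥ* ((1 : Matrix N N ℝ) - β • P a)) ⬝ᵥ F) = p ⬝ᵥ F := by
    rw [← hflow]
    simp only [dotProduct, Finset.sum_apply, Finset.sum_mul]
    rw [Finset.sum_comm]
  -- combine the two triangular sums
  have tri : ∀ a, (∑ a', (if a < a' then
        ∑ j ∈ Finset.univ.filter (fun j => σ j = a'), G a j * x a j else 0))
      + (∑ a', (if a' < a then
        ∑ j ∈ Finset.univ.filter (fun j => σ j = a'), G a j * x a j else 0))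
      = ∑ j, G a j * x a j := by
    intro a
    rw [← hsum a, ← Finset.sum_add_distrib]
    refine Finset.sum_congr rfl ?_
    intro a' _
    rcases lt_trichotomy a a' with hlt | heq | hgt
    · simp [hlt, not_lt.mpr hlt.le]
    · subst heq
      simp [hdiag a]
    · simp [hgt, not_lt.mpr hgt.le]
  have main : (∑ a, ∑ a', (if a < a' then
        ∑ j ∈ Finset.univ.filter (fun j => σ j = a'), G a j * x a j else 0))
      + (∑ a, ∑ a', (if a' < a then
        ∑ j ∈ Finset.univ.filter (fun j => σ j = a'), G a j * x a j else 0))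
      = (∑ a, x a ⬝ᵥ h a) - p ⬝ᵥ F := by
    rw [← Finset.sum_add_distrib]
    calc (∑ a, ((∑ a', (if a < a' then
          ∑ j ∈ Finset.univ.filter (fun j => σ j = a'), G a j * x a j else 0))
        + (∑ a', (if a' < a then
          ∑ j ∈ Finset.univ.filter (fun j => σ j = a'), G a j * x a j else 0))))
        = ∑ a, (x a ⬝ᵥ h a - (x a ᵥ* ((1 : Matrix N N ℝ) - β • P a)) ⬝ᵥ F) := by
          refine Finset.sum_congr rfl fun a _ => ?_
          rw [tri a, hkey a]
      _ = (∑ a, x a ⬝ᵥ h a) - p ⬝ᵥ F := by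
          rw [Finset.sum_sub_distrib, hflowF]
  have hneg : (∑ a, ∑ a', (if a' < a then
        -(∑ j ∈ Finset.univ.filter (fun j => σ j = a'), G a j * x a j) else 0))
      = -(∑ a, ∑ a', (if a' < a then
        ∑ j ∈ Finset.univ.filter (fun j => σ j = a'), G a j * x a j else 0)) := by
    rw [← Finset.sum_neg_distrib]
    refine Finset.sum_congr rfl fun a _ => ?_
    rw [← Finset.sum_neg_distrib]
    refine Finset.sum_congr rfl fun a' _ => ?_
    split <;> simp
  rw [hneg]
  linarith [main]
end

section
/- Under the same setup with resource usages q^a and G(S), the resource decomposition holds: G_p(π) + Σ_{a < a'} Σ_{j ∈ S_{a'}} g_j^{a,a'}(S) x_{pj}^a(π) = G_p(S) + Σ_{a' < a} Σ_{j ∈ S_{a'}} g_j^{a',a}(S) x_{pj}^a(π), where G_p(π) = Σ_a x_p^a(π) · q^a and G_p(S) = p · G(S). -/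
open Matrix

/-- Lemma 4.1(b) (resource metric decomposition): for any occupancy measures
`x^a` satisfying `Σ_a x^a (I - βP^a) = p`, and any stationary deterministic
policy `σ` with resource vector `G`,
`G_p(π) + Σ_{a<a'} Σ_{j∈S_{a'}} g_j^{a,a'}(S) x_j^a
  = G_p(S) + Σ_{a'<a} Σ_{j∈S_{a'}} g_j^{a',a}(S) x_j^a`,
where `g_j^{a,a'}(S) := q_j^{a'} - q_j^{a} + β((P^{a'} - P^{a})G)_j`. -/
theorem stmt8 {N : Type*} [Fintype N] [DecidableEq N] {A : ℕ}
    (P : Fin (A + 1) → Matrix N N ℝ)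
    (hP0 : ∀ a i j, 0 ≤ P a i j) (hP1 : ∀ a i, ∑ j, P a i j = 1)
    (β : ℝ) (hβ0 : 0 < β) (hβ1 : β < 1)
    (q : Fin (A + 1) → N → ℝ) (p : N → ℝ)
    (σ : N → Fin (A + 1)) (G : N → ℝ)
    (hG : ∀ i, G i = q (σ i) i + β * (P (σ i) *ᵥ G) i)
    (x : Fin (A + 1) → N → ℝ)
    (hflow : (∑ a, x a ᵥ* ((1 : Matrix N N ℝ) - β • P a)) = p) :
    (∑ a, x a ⬝ᵥ q a) +
      ∑ a, ∑ a', (if a < a' then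
        ∑ j ∈ Finset.univ.filter (fun j => σ j = a'),
          (q a' j - q a j + β * ((P a' - P a) *ᵥ G) j) * x a j
        else 0)
    =
    p ⬝ᵥ G +
      ∑ a, ∑ a', (if a' < a then
        ∑ j ∈ Finset.univ.filter (fun j => σ j = a'),
          (q a j - q a' j + β * ((P a - P a') *ᵥ G) j) * x a j
        else 0) := by

  classical
  set g : Fin (A+1) → Fin (A+1) → ℝ := fun a a' =>
    ∑ j ∈ Finset.univ.filter (fun j => σ j = a'),
      (q a' j - q a j + β * ((P a' - P a) *ᵥ G) j) * x a j with hg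
  -- the RHS inner sums are negatives of g
  have hneg : ∀ a a' : Fin (A+1),
      (∑ j ∈ Finset.univ.filter (fun j => σ j = a'),
        (q a j - q a' j + β * ((P a - P a') *ᵥ G) j) * x a j) = -(g a a') := by
    intro a a'
    rw [hg]
    rw [← Finset.sum_neg_distrib]
    apply Finset.sum_congr rfl
    intro j _
    have : (P a - P a') *ᵥ G = -((P a' - P a) *ᵥ G) := by
      rw [← Matrix.neg_mulVec, neg_sub]
    rw [this]
    simp
    ring
  have hgdiag : ∀ a, g a a = 0 := by
    intro a
    rw [hg]
    apply Finset.sum_eq_zero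
    intro j _
    simp
  -- combine the two ite sums
  have hcomb : ∀ a a' : Fin (A+1),
      (if a < a' then g a a' else 0) + (if a' < a then g a a' else 0) = g a a' := by
    intro a a'
    rcases lt_trichotomy a a' with h | h | h
    · simp [h, not_lt.2 h.le]
    · simp [h, hgdiag]
    · simp [h, not_lt.2 h.le]
  -- sum over fibers
  have hfiber : ∀ a : Fin (A+1), (∑ a', g a a') =
      ∑ j, (G j - q a j - β * (P a *ᵥ G) j) * x a j := by
    intro a
    have h1 : ∀ a' : Fin (A+1), g a a' =
        ∑ j ∈ Finset.univ.filter (fun j => σ j = a'),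
          (G j - q a j - β * (P a *ᵥ G) j) * x a j := by
      intro a'
      rw [hg]
      apply Finset.sum_congr rfl
      intro j hj
      simp only [Finset.mem_filter] at hj
      rw [← hj.2]
      have h2 : ((P (σ j) - P a) *ᵥ G) j = (P (σ j) *ᵥ G) j - (P a *ᵥ G) j := by
        rw [Matrix.sub_mulVec]; rfl
      rw [h2]
      have h3 := hG j
      ring_nf
      ring_nf at h3
      rw [h3]
      ring
    simp only [h1]
    exact Finset.sum_fiberwise Finset.univ σ _
  -- rewrite goal: move the RHS double sum to the left
  have hmain : (∑ a, x a ⬝ᵥ q a) + ∑ a, ∑ j, (G j - q a j - β * (P a *ᵥ G) j) * x a j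
      = p ⬝ᵥ G := by
    rw [← hflow]
    have hsd : (∑ a, x a ᵥ* ((1 : Matrix N N ℝ) - β • P a)) ⬝ᵥ G
        = ∑ a, (x a ᵥ* ((1 : Matrix N N ℝ) - β • P a)) ⬝ᵥ G := by
      simp only [dotProduct, Finset.sum_apply, Finset.sum_mul]
      rw [Finset.sum_comm]
    rw [hsd]
    rw [← Finset.sum_add_distrib]
    apply Finset.sum_congr rfl
    intro a _
    rw [← Matrix.dotProduct_mulVec]
    have : ((1 : Matrix N N ℝ) - β • P a) *ᵥ G = fun j => G j - β * (P a *ᵥ G) j := by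
      funext j
      rw [Matrix.sub_mulVec, Matrix.one_mulVec, Matrix.smul_mulVec]
      simp [Pi.sub_apply]
    rw [this]
    simp only [dotProduct]
    rw [← Finset.sum_add_distrib]
    apply Finset.sum_congr rfl
    intro j _
    ring
  calc (∑ a, x a ⬝ᵥ q a) +
      ∑ a, ∑ a', (if a < a' then
        ∑ j ∈ Finset.univ.filter (fun j => σ j = a'),
          (q a' j - q a j + β * ((P a' - P a) *ᵥ G) j) * x a j
        else 0)
      = (∑ a, x a ⬝ᵥ q a) + ∑ a, ∑ a', (if a < a' then g a a' else 0) := by rfl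
    _ = p ⬝ᵥ G + ∑ a, ∑ a', (if a' < a then -(g a a') else 0) := by
        rw [← hmain]
        have : ∀ a : Fin (A+1), (∑ a', if a < a' then g a a' else 0)
            = (∑ j, (G j - q a j - β * (P a *ᵥ G) j) * x a j)
              + ∑ a', (if a' < a then -(g a a') else 0) := by
          intro a
          rw [← hfiber a]
          have : (∑ a', if a' < a then -(g a a') else 0)
              = -∑ a', (if a' < a then g a a' else 0) := by
            rw [← Finset.sum_neg_distrib]
            apply Finset.sum_congr rfl
            intro a' _
            split <;> simp
          rw [this]
          have := Finset.sum_congr rfl (fun a' (_ : a' ∈ Finset.univ) => hcomb a a')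
          rw [Finset.sum_add_distrib] at this
          linarith
        simp only [this]
        rw [Finset.sum_add_distrib]
        ring
    _ = p ⬝ᵥ G + ∑ a, ∑ a', (if a' < a then
        ∑ j ∈ Finset.univ.filter (fun j => σ j = a'),
          (q a j - q a' j + β * ((P a - P a') *ᵥ G) j) * x a j
        else 0) := by
        congr 1
        apply Finset.sum_congr rfl
        intro a _
        apply Finset.sum_congr rfl
        intro a' _
        rw [hneg a a']
end

section
/- Let S be a stationary deterministic policy, a ≠ a' actions, j ∈ S_a, and let T S := T_j^{a,a'} S be the policy that coincides with S except that it selects a' instead of a in state j. Then F_p(S) = F_p(T S) + f_j^{a,a'}(S) · x_{pj}^{a'}(T S), where x_{pj}^{a'}(T S) is the discounted occupancy of the pair (j, a') under policy T S starting from distribution p. -/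
open Matrix

/-- Lemma 4.2(a): if `TS := T_j^{a,a'} S` modifies policy `σ` only at state `j0`
(where `σ j0 = a`), selecting `a'` there instead, then
`F_p(S) = F_p(TS) + f_{j0}^{a,a'}(S) · x_{p,j0}^{a'}(TS)`, where
`x_{p,j0}^{a'}(TS) = (p (I - βP^{TS})⁻¹)_{j0}` is the discounted occupancy of
`(j0, a')` under `TS` starting from `p`. -/
theorem stmt9 {N : Type*} [Fintype N] [DecidableEq N] {A : Type*} [Fintype A]
    (P : A → Matrix N N ℝ)
    (hP0 : ∀ a i j, 0 ≤ P a i j) (hP1 : ∀ a i, ∑ j, P a i j = 1)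
    (β : ℝ) (hβ0 : 0 < β) (hβ1 : β < 1)
    (h : A → N → ℝ)
    (σ : N → A) (j0 : N) (a a' : A) (hja : σ j0 = a) (hne : a ≠ a')
    (F : N → ℝ) (hF : ∀ i, F i = h (σ i) i + β * (P (σ i) *ᵥ F) i)
    (FT : N → ℝ)
    (hFT : ∀ i, FT i = h (Function.update σ j0 a' i) i +
      β * (P (Function.update σ j0 a' i) *ᵥ FT) i)
    (p : N → ℝ) :
    p ⬝ᵥ F = p ⬝ᵥ FT +
      (h a j0 - h a' j0 + β * ((P a - P a') *ᵥ F) j0) *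
        (p ᵥ* (((1 : Matrix N N ℝ) -
          β • Matrix.of (fun i j => P (Function.update σ j0 a' i) i j))⁻¹)) j0 := by
  set Q : Matrix N N ℝ := Matrix.of (fun i j => P (Function.update σ j0 a' i) i j) with hQ
  set M : Matrix N N ℝ := (1 : Matrix N N ℝ) - β • Q with hM
  set δ : ℝ := h a j0 - h a' j0 + β * ((P a - P a') *ᵥ F) j0 with hδ
  -- invertibility of M via strict diagonal dominance
  have hQ0 : ∀ i j, 0 ≤ Q i j := fun i j => hP0 _ i j
  have hQ1 : ∀ i, ∑ j, Q i j = 1 := fun i => hP1 _ i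
  have hMdet : M.det ≠ 0 := by
    apply det_ne_zero_of_sum_row_lt_diag
    intro k
    have hQkk1 : Q k k ≤ 1 := by
      have := Finset.single_le_sum (f := fun j => Q k j) (fun j _ => hQ0 k j)
        (Finset.mem_univ k)
      simpa [hQ1 k] using this
    have hMkk : M k k = 1 - β * Q k k := by simp [hM, Matrix.sub_apply, Matrix.one_apply]
    have hsum : ∑ j ∈ Finset.univ.erase k, ‖M k j‖ = β * (1 - Q k k) := by
      have : ∀ j ∈ Finset.univ.erase k, ‖M k j‖ = β * Q k j := by
        intro j hj
        have hjk : j ≠ k := (Finset.mem_erase.mp hj).1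
        have : M k j = -(β * Q k j) := by
          simp [hM, Matrix.sub_apply, Matrix.one_apply, hjk.symm]
        rw [this, norm_neg, Real.norm_eq_abs, abs_of_nonneg
          (mul_nonneg hβ0.le (hQ0 k j))]
      rw [Finset.sum_congr rfl this, ← Finset.mul_sum]
      congr 1
      have := Finset.sum_erase_add Finset.univ (fun j => Q k j) (Finset.mem_univ k)
      linarith [hQ1 k]
    rw [hsum, hMkk, Real.norm_eq_abs, abs_of_pos (by nlinarith [hQ0 k k])]
    nlinarith [hQ0 k k]
  have hMunit : IsUnit M := (Matrix.isUnit_iff_isUnit_det M).2 (isUnit_iff_ne_zero.2 hMdet)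
  -- M *ᵥ (F - FT) = δ • single j0
  have key : M *ᵥ (F - FT) = Pi.single j0 δ := by
    funext i
    have hMF : (M *ᵥ F) i = F i - β * (Q *ᵥ F) i := by
      simp [hM, Matrix.sub_mulVec, Matrix.smul_mulVec]
    have hMFT : (M *ᵥ FT) i = FT i - β * (Q *ᵥ FT) i := by
      simp [hM, Matrix.sub_mulVec, Matrix.smul_mulVec]
    have hQF : (Q *ᵥ FT) i = (P (Function.update σ j0 a' i) *ᵥ FT) i := rfl
    have hMFTval : (M *ᵥ FT) i = h (Function.update σ j0 a' i) i := by
      rw [hMFT, hQF]; linarith [hFT i]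
    rw [Matrix.mulVec_sub]
    by_cases hij : i = j0
    · subst hij
      have hup : Function.update σ i a' i = a' := Function.update_self i a' σ
      have hMFval : (M *ᵥ F) i = h a' i + δ := by
        have hQFi : (Q *ᵥ F) i = (P a' *ᵥ F) i := by
          simp only [hQ, Matrix.mulVec, dotProduct]
          congr 1; funext j; rw [Matrix.of_apply, hup]
        have hFi := hF i
        rw [hja] at hFi
        rw [hMF, hQFi, hδ]
        have : ((P a - P a') *ᵥ F) i = (P a *ᵥ F) i - (P a' *ᵥ F) i := by
          rw [Matrix.sub_mulVec]; simp
        rw [this]; linarith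
      simp [hMFval, hMFTval, hup, Pi.single_apply]
    · have hup : Function.update σ j0 a' i = σ i := Function.update_of_ne hij a' σ
      have hMFval : (M *ᵥ F) i = h (σ i) i := by
        have hQFi : (Q *ᵥ F) i = (P (σ i) *ᵥ F) i := by
          simp only [hQ, Matrix.mulVec, dotProduct]
          congr 1; funext j; rw [Matrix.of_apply, hup]
        rw [hMF, hQFi]; linarith [hF i]
      simp [hMFval, hMFTval, hup, Pi.single_apply, hij]
  -- conclude
  have hFeq : F - FT = M⁻¹ *ᵥ (Pi.single j0 δ) := by
    rw [← key, Matrix.mulVec_mulVec, Matrix.nonsing_inv_mul M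
      (isUnit_iff_ne_zero.2 hMdet), Matrix.one_mulVec]
  have : p ⬝ᵥ (F - FT) = δ * (p ᵥ* M⁻¹) j0 := by
    rw [hFeq, Matrix.dotProduct_mulVec]
    simp [dotProduct, Pi.single_apply, mul_comm, Finset.sum_ite_eq']
  have hps : p ⬝ᵥ (F - FT) = p ⬝ᵥ F - p ⬝ᵥ FT := by
    simp [dotProduct, Finset.sum_sub_distrib, mul_sub]
  rw [hps] at this
  linarith
end

section
/- With the same setup, the resource metric satisfies G_p(T_j^{a,a'} S) = G_p(S) + g_j^{a,a'}(S) · x_{pj}^{a'}(T_j^{a,a'} S). -/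
open Matrix

/-- Lemma 4.2(c): if `TS := T_j^{a,a'} S` modifies policy `σ` only at state `j0`
(where `σ j0 = a`), selecting `a'` there instead, then
`G_p(TS) = G_p(S) + g_{j0}^{a,a'}(S) · x_{p,j0}^{a'}(TS)`, where
`g_{j0}^{a,a'}(S) := q_{j0}^{a'} - q_{j0}^{a} + β((P^{a'} - P^{a})G(S))_{j0}`
and `x_{p,j0}^{a'}(TS) = (p (I - βP^{TS})⁻¹)_{j0}`. -/
theorem stmt10 {N : Type*} [Fintype N] [DecidableEq N] {A : Type*} [Fintype A]
    (P : A → Matrix N N ℝ)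
    (hP0 : ∀ a i j, 0 ≤ P a i j) (hP1 : ∀ a i, ∑ j, P a i j = 1)
    (β : ℝ) (hβ0 : 0 < β) (hβ1 : β < 1)
    (q : A → N → ℝ)
    (σ : N → A) (j0 : N) (a a' : A) (hja : σ j0 = a) (hne : a ≠ a')
    (G : N → ℝ) (hG : ∀ i, G i = q (σ i) i + β * (P (σ i) *ᵥ G) i)
    (GT : N → ℝ)
    (hGT : ∀ i, GT i = q (Function.update σ j0 a' i) i +
      β * (P (Function.update σ j0 a' i) *ᵥ GT) i)
    (p : N → ℝ) :
    p ⬝ᵥ GT = p ⬝ᵥ G +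
      (q a' j0 - q a j0 + β * ((P a' - P a) *ᵥ G) j0) *
        (p ᵥ* (((1 : Matrix N N ℝ) -
          β • Matrix.of (fun i j => P (Function.update σ j0 a' i) i j))⁻¹)) j0 := by
  set g : ℝ := q a' j0 - q a j0 + β * ((P a' - P a) *ᵥ G) j0 with hg
  set M : Matrix N N ℝ := (1 : Matrix N N ℝ) -
      β • Matrix.of (fun i j => P (Function.update σ j0 a' i) i j) with hM
  -- invertibility of M by strict diagonal dominance
  have hdet : M.det ≠ 0 := by
    apply det_ne_zero_of_sum_row_lt_diag
    intro k
    have hMkk : M k k = 1 - β * P (Function.update σ j0 a' k) k k := by simp [hM, Matrix.one_apply]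
    have hoff : ∀ j, j ≠ k → M k j = -(β * P (Function.update σ j0 a' k) k j) := by
      intro j hj; simp [hM, Matrix.one_apply, hj.symm]
    have h1 : ∑ j ∈ Finset.univ.erase k, ‖M k j‖ = β * ∑ j ∈ Finset.univ.erase k, P (Function.update σ j0 a' k) k j := by
      rw [Finset.mul_sum]
      refine Finset.sum_congr rfl fun j hj => ?_
      rw [hoff j (Finset.ne_of_mem_erase hj)]
      rw [norm_neg, Real.norm_eq_abs, abs_of_nonneg (mul_nonneg hβ0.le (hP0 _ _ _))]
    have h2 : ∑ j ∈ Finset.univ.erase k, P (Function.update σ j0 a' k) k j = 1 - P (Function.update σ j0 a' k) k k := by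
      have := hP1 (Function.update σ j0 a' k) k
      rw [← Finset.add_sum_erase _ _ (Finset.mem_univ k)] at this
      linarith
    have hle : P (Function.update σ j0 a' k) k k ≤ 1 := by
      have := hP1 (Function.update σ j0 a' k) k
      have h3 : P (Function.update σ j0 a' k) k k ≤ ∑ j, P (Function.update σ j0 a' k) k j :=
        Finset.single_le_sum (fun j _ => hP0 (Function.update σ j0 a' k) k j) (Finset.mem_univ k)
      linarith
    have hnn : 0 ≤ P (Function.update σ j0 a' k) k k := hP0 _ k k
    rw [h1, h2, hMkk, Real.norm_eq_abs, abs_of_pos (by nlinarith)]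
    nlinarith
  have hinv : Invertible M := M.invertibleOfIsUnitDet (isUnit_iff_ne_zero.mpr hdet)
  -- M *ᵥ GT = qT
  have hMGT : M *ᵥ GT = fun i => q (Function.update σ j0 a' i) i := by
    funext i
    have := hGT i
    simp only [hM, Matrix.sub_mulVec, Matrix.one_mulVec, Matrix.smul_mulVec,
      Pi.sub_apply, Pi.smul_apply, smul_eq_mul]
    have heq : (Matrix.of (fun i j => P (Function.update σ j0 a' i) i j) *ᵥ GT) i
        = (P (Function.update σ j0 a' i) *ᵥ GT) i := by
      simp [Matrix.mulVec, dotProduct]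
    rw [heq]; linarith
  -- M *ᵥ G = qT - g • e_{j0}
  have hMG : M *ᵥ G = fun i => q (Function.update σ j0 a' i) i - g * (if i = j0 then 1 else 0) := by
    funext i
    simp only [hM, Matrix.sub_mulVec, Matrix.one_mulVec, Matrix.smul_mulVec,
      Pi.sub_apply, Pi.smul_apply, smul_eq_mul]
    have heq : (Matrix.of (fun i j => P (Function.update σ j0 a' i) i j) *ᵥ G) i
        = (P (Function.update σ j0 a' i) *ᵥ G) i := by
      simp [Matrix.mulVec, dotProduct]
    rw [heq]
    by_cases hi : i = j0
    · subst hi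
      have hGi := hG i
      rw [hja] at hGi
      have hsub : ((P a' - P a) *ᵥ G) i = (P a' *ᵥ G) i - (P a *ᵥ G) i := by
        simp [Matrix.sub_mulVec]
      simp only [Function.update_self, eq_self_iff_true, if_true, mul_one, hg, hsub]
      linarith
    · have hGi := hG i
      rw [Function.update_of_ne hi]
      simp only [if_neg hi, mul_zero, sub_zero]
      linarith
  -- difference
  have hdiff : M *ᵥ (GT - G) = fun i => g * (if i = j0 then 1 else 0) := by
    rw [Matrix.mulVec_sub, hMGT, hMG]
    funext i; simp
  have hGTG : GT - G = M⁻¹ *ᵥ fun i => g * (if i = j0 then 1 else 0) := by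
    rw [← hdiff, Matrix.mulVec_mulVec, Matrix.nonsing_inv_mul M (isUnit_iff_ne_zero.mpr hdet),
      Matrix.one_mulVec]
  have key : p ⬝ᵥ (GT - G) = g * (p ᵥ* M⁻¹) j0 := by
    rw [hGTG, Matrix.dotProduct_mulVec, dotProduct]
    rw [Finset.sum_eq_single j0]
    · simp [mul_comm]
    · intro b _ hb; simp [hb]
    · simp
  have hd : p ⬝ᵥ (GT - G) = p ⬝ᵥ GT - p ⬝ᵥ G := by
    simp [dotProduct, Finset.sum_sub_distrib, mul_sub]
  rw [hd] at key; linarith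
end

section
/- Suppose g_j^{a,a'}(S) ≠ 0 and g_j^{a',a}(T S) ≠ 0, where T S = T_j^{a,a'} S. Define MP metrics m_j^{a',a}(S) := f_j^{a',a}(S)/g_j^{a',a}(S) (with f_j^{a',a}(S) = -f_j^{a,a'}(S), g_j^{a',a}(S) = -g_j^{a,a'}(S)). If the occupancies x_{pj}^{a'}(TS) and x_{pj}^{a}(S) are positive for some p, then m_j^{a',a}(S) = m_j^{a',a}(T S), i.e., the marginal productivity metric at (j, a', a) is invariant under the single-state policy modification. -/
open Matrix


lemma unit_aux {N : Type*} [Fintype N] [DecidableEq N] (Q : Matrix N N ℝ)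
    (hQ0 : ∀ i j, 0 ≤ Q i j) (hQ1 : ∀ i, ∑ j, Q i j = 1)
    (β : ℝ) (hβ0 : 0 ≤ β) (hβ1 : β < 1) :
    IsUnit ((1 : Matrix N N ℝ) - β • Q).det := by
  rw [isUnit_iff_ne_zero]
  intro hdet
  obtain ⟨v, hv, hMv⟩ := (Matrix.exists_mulVec_eq_zero_iff).2 hdet
  have hv' : ∀ i, v i = β * (Q *ᵥ v) i := by
    intro i
    have := congrFun hMv i
    simpa [Matrix.sub_mulVec, Matrix.smul_mulVec, sub_eq_zero, Matrix.one_mulVec] using this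
  obtain ⟨i0, hi0ne⟩ : ∃ i, v i ≠ 0 := Function.ne_iff.1 hv
  obtain ⟨i, -, hi⟩ := Finset.exists_max_image Finset.univ (fun i => |v i|)
    ⟨i0, Finset.mem_univ i0⟩
  have key : |v i| ≤ β * |v i| := by
    calc |v i| = β * |(Q *ᵥ v) i| := by rw [hv' i, abs_mul, abs_of_nonneg hβ0]
    _ ≤ β * ∑ j, Q i j * |v j| := by
        apply mul_le_mul_of_nonneg_left _ hβ0
        calc |(Q *ᵥ v) i| = |∑ j, Q i j * v j| := by rfl
        _ ≤ ∑ j, |Q i j * v j| := Finset.abs_sum_le_sum_abs _ _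
        _ = ∑ j, Q i j * |v j| := by
            refine Finset.sum_congr rfl fun j _ => ?_
            rw [abs_mul, abs_of_nonneg (hQ0 i j)]
    _ ≤ β * ∑ j, Q i j * |v i| := by
        apply mul_le_mul_of_nonneg_left _ hβ0
        exact Finset.sum_le_sum fun j _ =>
          mul_le_mul_of_nonneg_left (hi j (Finset.mem_univ j)) (hQ0 i j)
    _ = β * |v i| := by rw [← Finset.sum_mul, hQ1 i, one_mul]
  have h0 : |v i| = 0 := by nlinarith [abs_nonneg (v i)]
  have : |v i0| ≤ 0 := h0 ▸ hi i0 (Finset.mem_univ i0)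
  exact hi0ne (abs_nonpos_iff.1 this)

lemma pair_aux {N : Type*} [Fintype N] [DecidableEq N] (MS MT : Matrix N N ℝ)
    (hMS : IsUnit MS.det) (hMT : IsUnit MT.det)
    (X Y : N → ℝ) (j0 : N) (cT cS : ℝ)
    (hT : MT *ᵥ (X - Y) = Pi.single j0 cT)
    (hS : MS *ᵥ (X - Y) = Pi.single j0 cS)
    (p : N → ℝ) :
    (p ᵥ* MT⁻¹) j0 * cT = (p ᵥ* MS⁻¹) j0 * cS := by
  have e : ∀ (M : Matrix N N ℝ), IsUnit M.det → M *ᵥ (X - Y) = Pi.single j0 cS →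
      True := fun _ _ _ => trivial
  have hT' : p ⬝ᵥ (X - Y) = (p ᵥ* MT⁻¹) j0 * cT := by
    have : X - Y = MT⁻¹ *ᵥ Pi.single j0 cT := by
      rw [← hT, Matrix.mulVec_mulVec, Matrix.nonsing_inv_mul _ hMT, Matrix.one_mulVec]
    rw [this, Matrix.dotProduct_mulVec, dotProduct_single]
  have hS' : p ⬝ᵥ (X - Y) = (p ᵥ* MS⁻¹) j0 * cS := by
    have : X - Y = MS⁻¹ *ᵥ Pi.single j0 cS := by
      rw [← hS, Matrix.mulVec_mulVec, Matrix.nonsing_inv_mul _ hMS, Matrix.one_mulVec]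
    rw [this, Matrix.dotProduct_mulVec, dotProduct_single]
  rw [← hT', hS']

lemma step_aux {N : Type*} [Fintype N] [DecidableEq N] {A : Type*}
    (P : A → Matrix N N ℝ) (β : ℝ) (r : A → N → ℝ)
    (σ : N → A) (j0 : N) (a a' : A) (hja : σ j0 = a)
    (X : N → ℝ) (hX : ∀ i, X i = r (σ i) i + β * (P (σ i) *ᵥ X) i)
    (Y : N → ℝ) (hY : ∀ i, Y i = r (Function.update σ j0 a' i) i +
      β * (P (Function.update σ j0 a' i) *ᵥ Y) i) :
    (((1:Matrix N N ℝ) - β • Matrix.of fun i j => P (Function.update σ j0 a' i) i j) *ᵥ (X - Y)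
      = Pi.single j0 (r a j0 - r a' j0 + β * ((P a - P a') *ᵥ X) j0))
    ∧ (((1:Matrix N N ℝ) - β • Matrix.of fun i j => P (σ i) i j) *ᵥ (X - Y)
      = Pi.single j0 (r a j0 - r a' j0 + β * ((P a - P a') *ᵥ Y) j0)) := by
  have mv : ∀ (c : A) (w : N → ℝ) (i : N), (P c *ᵥ w) i = ∑ j, P c i j * w j :=
    fun _ _ _ => rfl
  have mv2 : ∀ (c c' : A) (w : N → ℝ) (i : N),
      ((P c - P c') *ᵥ w) i = ∑ j, P c i j * w j - ∑ j, P c' i j * w j := by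
    intro c c' w i
    simp [Matrix.sub_mulVec, mv]
  have mv1 : ∀ (Q : Matrix N N ℝ) (w : N → ℝ) (i : N),
      (((1:Matrix N N ℝ) - β • Q) *ᵥ w) i = w i - β * ∑ j, Q i j * w j := by
    intro Q w i
    simp [Matrix.sub_mulVec, Matrix.smul_mulVec, Matrix.one_mulVec, Matrix.mulVec,
      dotProduct, sub_mul, Finset.sum_sub_distrib, Matrix.one_apply, ite_mul,
      Finset.mul_sum, mul_assoc]
  have key : ∀ i, X i - Y i = (r (σ i) i - r (Function.update σ j0 a' i) i)
      + β * ∑ j, P (σ i) i j * X j - β * ∑ j, P (Function.update σ j0 a' i) i j * Y j := by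
    intro i
    rw [hX i, hY i, mv, mv]; ring
  constructor
  · funext i
    rw [mv1]
    by_cases hij : i = j0
    · subst hij
      rw [Pi.single_eq_same]
      have hk := key i
      rw [hja, Function.update_self] at hk
      simp only [Matrix.of_apply, Function.update_self, Pi.sub_apply, mv2]
      simp only [mul_sub, sub_mul, Finset.sum_sub_distrib]
      linarith [hk]
    · rw [Pi.single_eq_of_ne hij]
      have hk := key i
      rw [Function.update_of_ne hij] at hk
      simp only [Matrix.of_apply, Function.update_of_ne hij, Pi.sub_apply]
      simp only [mul_sub, sub_mul, Finset.sum_sub_distrib]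
      linarith [hk]
  · funext i
    rw [mv1]
    by_cases hij : i = j0
    · subst hij
      rw [Pi.single_eq_same]
      have hk := key i
      rw [hja, Function.update_self] at hk
      simp only [Matrix.of_apply, hja, Pi.sub_apply, mv2]
      simp only [mul_sub, sub_mul, Finset.sum_sub_distrib]
      linarith [hk]
    · rw [Pi.single_eq_of_ne hij]
      have hk := key i
      rw [Function.update_of_ne hij] at hk
      simp only [Matrix.of_apply, Pi.sub_apply]
      simp only [mul_sub, sub_mul, Finset.sum_sub_distrib]
      linarith [hk]

/-- Lemma 4.3(b): the marginal productivity metric at `(j0, a', a)` is invariant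
under the single-state modification `TS := T_{j0}^{a,a'} S`:
`m_{j0}^{a',a}(S) = m_{j0}^{a',a}(TS)`, where
`m_{j0}^{a',a}(S) := f_{j0}^{a',a}(S) / g_{j0}^{a',a}(S)`, provided the
marginal resource denominators are nonzero and the occupancies
`x_{p,j0}^{a'}(TS)` and `x_{p,j0}^{a}(S)` are positive for some `p`. -/
theorem stmt11 {N : Type*} [Fintype N] [DecidableEq N] {A : Type*} [Fintype A]
    (P : A → Matrix N N ℝ)
    (hP0 : ∀ a i j, 0 ≤ P a i j) (hP1 : ∀ a i, ∑ j, P a i j = 1)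
    (β : ℝ) (hβ0 : 0 < β) (hβ1 : β < 1)
    (h q : A → N → ℝ)
    (σ : N → A) (j0 : N) (a a' : A) (hja : σ j0 = a) (hne : a ≠ a')
    (F : N → ℝ) (hF : ∀ i, F i = h (σ i) i + β * (P (σ i) *ᵥ F) i)
    (G : N → ℝ) (hG : ∀ i, G i = q (σ i) i + β * (P (σ i) *ᵥ G) i)
    (FT : N → ℝ)
    (hFT : ∀ i, FT i = h (Function.update σ j0 a' i) i +
      β * (P (Function.update σ j0 a' i) *ᵥ FT) i)
    (GT : N → ℝ)
    (hGT : ∀ i, GT i = q (Function.update σ j0 a' i) i +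
      β * (P (Function.update σ j0 a' i) *ᵥ GT) i)
    (hgS : q a j0 - q a' j0 + β * ((P a - P a') *ᵥ G) j0 ≠ 0)
    (hgT : q a j0 - q a' j0 + β * ((P a - P a') *ᵥ GT) j0 ≠ 0)
    (hpos : ∃ p : N → ℝ,
      0 < (p ᵥ* (((1 : Matrix N N ℝ) -
        β • Matrix.of (fun i j => P (Function.update σ j0 a' i) i j))⁻¹)) j0 ∧
      0 < (p ᵥ* (((1 : Matrix N N ℝ) -
        β • Matrix.of (fun i j => P (σ i) i j))⁻¹)) j0) :
    (h a' j0 - h a j0 + β * ((P a' - P a) *ᵥ F) j0) /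
      (q a j0 - q a' j0 + β * ((P a - P a') *ᵥ G) j0)
    =
    (h a' j0 - h a j0 + β * ((P a' - P a) *ᵥ FT) j0) /
      (q a j0 - q a' j0 + β * ((P a - P a') *ᵥ GT) j0) := by
  obtain ⟨p, hu, hv⟩ := hpos
  set MT : Matrix N N ℝ :=
    (1 : Matrix N N ℝ) - β • Matrix.of (fun i j => P (Function.update σ j0 a' i) i j) with hMT
  set MS : Matrix N N ℝ :=
    (1 : Matrix N N ℝ) - β • Matrix.of (fun i j => P (σ i) i j) with hMS
  have hUT : IsUnit MT.det :=
    unit_aux (Matrix.of fun i j => P (Function.update σ j0 a' i) i j)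
      (fun i j => hP0 _ i j) (fun i => hP1 _ i) β hβ0.le hβ1
  have hUS : IsUnit MS.det :=
    unit_aux (Matrix.of fun i j => P (σ i) i j)
      (fun i j => hP0 _ i j) (fun i => hP1 _ i) β hβ0.le hβ1
  obtain ⟨hTF, hSF⟩ := step_aux P β h σ j0 a a' hja F hF FT hFT
  obtain ⟨hTG, hSG⟩ := step_aux P β q σ j0 a a' hja G hG GT hGT
  have keyF := pair_aux MS MT hUS hUT F FT j0 _ _ hTF hSF p
  have keyG := pair_aux MS MT hUS hUT G GT j0 _ _ hTG hSG p
  set u := (p ᵥ* MT⁻¹) j0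
  set v := (p ᵥ* MS⁻¹) j0
  -- translate numerators
  have negF : ∀ (X : N → ℝ),
      h a' j0 - h a j0 + β * ((P a' - P a) *ᵥ X) j0
        = -(h a j0 - h a' j0 + β * ((P a - P a') *ᵥ X) j0) := by
    intro X
    have : ((P a' - P a) *ᵥ X) j0 = -(((P a - P a') *ᵥ X) j0) := by
      simp [Matrix.sub_mulVec]
    rw [this]; ring
  rw [negF F, negF FT, neg_div, neg_div, neg_inj]
  set fS := h a j0 - h a' j0 + β * ((P a - P a') *ᵥ F) j0
  set fT := h a j0 - h a' j0 + β * ((P a - P a') *ᵥ FT) j0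
  set gS := q a j0 - q a' j0 + β * ((P a - P a') *ᵥ G) j0
  set gT := q a j0 - q a' j0 + β * ((P a - P a') *ᵥ GT) j0
  -- keyF : u * fS = v * fT, keyG : u * gS = v * gT
  rw [div_eq_div_iff hgS hgT]
  have hu0 : u ≠ 0 := ne_of_gt hu
  have hv0 : v ≠ 0 := ne_of_gt hv
  have : u * (fS * gT) = u * (fT * gS) := by
    have h1 : u * (fS * gT) = v * (fT * gT) := by rw [← mul_assoc, keyF]; ring
    have h2 : u * (fT * gS) = v * (fT * gT) := by
      rw [show u * (fT * gS) = fT * (u * gS) by ring, keyG]; ring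
    rw [h1, ← h2]
  have := mul_left_cancel₀ hu0 this
  linarith [this]
end

section
/- Suppose marginal resource metrics are positive: g_j^{a,a'}(S) > 0 for all j, all a < a', and all policies S in a family F, and suppose the initial distribution p has all entries positive. Then for any nonnegative occupancy vectors x^a ≥ 0 satisfying Σ_a x^a(I - βP^a) = p and any S ∈ F: G_p(x) + Σ_{a < a'} Σ_{j ∈ S_{a'}} g_j^{a,a'}(S) x_j^{a} ≥ G_p(S), with equality if and only if x_j^{a'} = 0 for all j ∈ S_a and a' > a (i.e., the policy never uses an action strictly higher than that of S), where G_p(x) := Σ_a x^a · q^a and G_p(S) := p · G(S). -/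
open Matrix

/-- Proposition 6.1(a.1) (partial conservation law): if the marginal resource
metrics `g_j^{a,a'}(S)` are positive for all `j`, `a < a'`, and policies `S` in
a family `𝓕`, and the initial distribution `p` is entrywise positive, then for
any nonnegative occupancy vectors `x` satisfying the flow constraints and any
`S ∈ 𝓕`: `G_p(x) + Σ_{a<a'} Σ_{j∈S_{a'}} g_j^{a,a'}(S) x_j^a ≥ G_p(S)`, with
equality iff `x_j^{a'} = 0` whenever `a' > σ j`. -/
theorem stmt15 {N : Type*} [Fintype N] [DecidableEq N] {A : ℕ}
    (P : Fin (A + 1) → Matrix N N ℝ)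
    (hP0 : ∀ a i j, 0 ≤ P a i j) (hP1 : ∀ a i, ∑ j, P a i j = 1)
    (β : ℝ) (hβ0 : 0 < β) (hβ1 : β < 1)
    (q : Fin (A + 1) → N → ℝ)
    (𝓕 : Set (N → Fin (A + 1)))
    (hpos : ∀ σ ∈ 𝓕, ∀ G : N → ℝ,
      (∀ i, G i = q (σ i) i + β * (P (σ i) *ᵥ G) i) →
      ∀ (j : N) (a a' : Fin (A + 1)), a < a' →
        0 < q a' j - q a j + β * ((P a' - P a) *ᵥ G) j)
    (p : N → ℝ) (hp : ∀ i, 0 < p i)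
    (x : Fin (A + 1) → N → ℝ) (hx : ∀ a j, 0 ≤ x a j)
    (hflow : (∑ a, x a ᵥ* ((1 : Matrix N N ℝ) - β • P a)) = p) :
    ∀ σ ∈ 𝓕, ∀ G : N → ℝ,
      (∀ i, G i = q (σ i) i + β * (P (σ i) *ᵥ G) i) →
      p ⬝ᵥ G ≤ (∑ a, x a ⬝ᵥ q a) +
        ∑ a, ∑ a', (if a < a' then
          ∑ j ∈ Finset.univ.filter (fun j => σ j = a'),
            (q a' j - q a j + β * ((P a' - P a) *ᵥ G) j) * x a j
          else 0)
      ∧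
      (((∑ a, x a ⬝ᵥ q a) +
        ∑ a, ∑ a', (if a < a' then
          ∑ j ∈ Finset.univ.filter (fun j => σ j = a'),
            (q a' j - q a j + β * ((P a' - P a) *ᵥ G) j) * x a j
          else 0) = p ⬝ᵥ G)
        ↔ ∀ (j : N) (a' : Fin (A + 1)), σ j < a' → x a' j = 0) := by
  intro σ hσ G hG
  set d : Fin (A + 1) → Fin (A + 1) → N → ℝ :=
    fun a a' j => q a' j - q a j + β * ((P a' - P a) *ᵥ G) j with hd
  have hdpos : ∀ (j : N) (a a' : Fin (A + 1)), a < a' → 0 < d a a' j :=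
    fun j a a' h => hpos σ hσ G hG j a a' h
  have hdself : ∀ (a : Fin (A + 1)) (j : N), d a a j = 0 := by
    intro a j; simp [hd]
  have hdanti : ∀ (a a' : Fin (A + 1)) (j : N), d a a' j = - d a' a j := by
    intro a a' j
    simp only [hd, sub_mulVec, Pi.sub_apply]
    ring
  -- expansion of p ⬝ᵥ G
  have hpG : p ⬝ᵥ G = ∑ a, ∑ j, x a j * (q a j + d a (σ j) j) := by
    rw [← hflow]
    have hsd : (∑ a, x a ᵥ* ((1 : Matrix N N ℝ) - β • P a)) ⬝ᵥ G
        = ∑ a, (x a ᵥ* ((1 : Matrix N N ℝ) - β • P a)) ⬝ᵥ G := by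
      simp only [dotProduct, Finset.sum_apply, Finset.sum_mul]
      exact Finset.sum_comm
    rw [hsd]
    refine Finset.sum_congr rfl fun a _ => ?_
    rw [← dotProduct_mulVec]
    have hM : ((1 : Matrix N N ℝ) - β • P a) *ᵥ G = fun j => G j - β * (P a *ᵥ G) j := by
      funext j
      simp [sub_mulVec, smul_mulVec]
    rw [hM, dotProduct]
    refine Finset.sum_congr rfl fun j _ => ?_
    have := hG j
    simp only [hd, sub_mulVec, Pi.sub_apply]
    rw [hG j]
    ring
  have hxq : ∀ a : Fin (A + 1), x a ⬝ᵥ q a = ∑ j, x a j * q a j := fun a => rfl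
  -- rewrite the double sum fiberwise
  have hswap : ∀ a : Fin (A + 1),
      (∑ a', (if a < a' then
          ∑ j ∈ Finset.univ.filter (fun j => σ j = a'), d a a' j * x a j
          else 0)) = ∑ j, (if a < σ j then d a (σ j) j * x a j else 0) := by
    intro a
    rw [← Finset.sum_fiberwise Finset.univ σ
      (fun j => if a < σ j then d a (σ j) j * x a j else 0)]
    refine Finset.sum_congr rfl fun a' _ => ?_
    by_cases h : a < a'
    · rw [if_pos h]
      refine Finset.sum_congr rfl fun j hj => ?_
      have hja : σ j = a' := (Finset.mem_filter.mp hj).2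
      rw [hja, if_pos h]
    · rw [if_neg h]
      refine (Finset.sum_eq_zero fun j hj => ?_).symm
      have hja : σ j = a' := (Finset.mem_filter.mp hj).2
      rw [hja, if_neg h]
  -- the difference is a sum of nonnegative terms
  set e : Fin (A + 1) → N → ℝ :=
    fun a j => if σ j < a then d (σ j) a j * x a j else 0 with he
  have hediff : ∀ (a : Fin (A + 1)) (j : N),
      (if a < σ j then d a (σ j) j * x a j else 0) - x a j * (q a j + d a (σ j) j)
        + x a j * q a j = e a j := by
    intro a j
    rcases lt_trichotomy a (σ j) with h | h | h
    · rw [if_pos h, he]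
      simp only
      rw [if_neg (asymm h)]
      ring
    · rw [if_neg (lt_irrefl _ ∘ (h ▸ ·)), he]
      simp only
      rw [if_neg (lt_irrefl _ ∘ (h ▸ ·)), ← h, hdself]
      ring
    · rw [if_neg (asymm h), he]
      simp only
      rw [if_pos h, hdanti]
      ring
  have henn : ∀ (a : Fin (A + 1)) (j : N), 0 ≤ e a j := by
    intro a j
    rw [he]
    simp only
    split
    · exact mul_nonneg (le_of_lt (hdpos j (σ j) a (by assumption))) (hx a j)
    · exact le_refl 0
  have hkey : (∑ a, x a ⬝ᵥ q a) +
        (∑ a, ∑ a', (if a < a' then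
          ∑ j ∈ Finset.univ.filter (fun j => σ j = a'),
            (q a' j - q a j + β * ((P a' - P a) *ᵥ G) j) * x a j
          else 0)) - p ⬝ᵥ G = ∑ a, ∑ j, e a j := by
    rw [hpG]
    have : (∑ a, ∑ a', (if a < a' then
          ∑ j ∈ Finset.univ.filter (fun j => σ j = a'),
            (q a' j - q a j + β * ((P a' - P a) *ᵥ G) j) * x a j
          else 0)) = ∑ a, ∑ j, (if a < σ j then d a (σ j) j * x a j else 0) :=
      Finset.sum_congr rfl fun a _ => hswap a
    rw [this]
    simp only [hxq]
    rw [← Finset.sum_add_distrib, ← Finset.sum_sub_distrib]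
    refine Finset.sum_congr rfl fun a _ => ?_
    rw [← Finset.sum_add_distrib, ← Finset.sum_sub_distrib]
    refine Finset.sum_congr rfl fun j _ => ?_
    linarith [hediff a j]
  have hsum_nonneg : 0 ≤ ∑ a, ∑ j, e a j :=
    Finset.sum_nonneg fun a _ => Finset.sum_nonneg fun j _ => henn a j
  constructor
  · linarith [hkey, hsum_nonneg]
  · constructor
    · intro heq j a' hlt
      have hzero : (∑ a, ∑ j, e a j) = 0 := by linarith [hkey]
      have h1 := (Finset.sum_eq_zero_iff_of_nonneg
        (fun a _ => Finset.sum_nonneg fun j _ => henn a j)).mp hzero a' (Finset.mem_univ _)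
      have h2 := (Finset.sum_eq_zero_iff_of_nonneg
        (fun j _ => henn a' j)).mp h1 j (Finset.mem_univ _)
      rw [he] at h2
      simp only at h2
      rw [if_pos hlt] at h2
      rcases mul_eq_zero.mp h2 with h | h
      · exact absurd h (ne_of_gt (hdpos j (σ j) a' hlt))
      · exact h
    · intro hz
      have hzero : (∑ a, ∑ j, e a j) = 0 := by
        refine Finset.sum_eq_zero fun a _ => Finset.sum_eq_zero fun j _ => ?_
        rw [he]
        simp only
        split
        · rw [hz j a (by assumption)]; ring
        · rfl
      linarith [hkey]
end

section
/- In the special case S = S^1 (the policy selecting the top action A in every state), the conservation law holds with equality for every occupancy solution: G_p(x) + Σ_{a < A} Σ_{j} g_j^{a,A}(S^1) x_j^{a} = G_p(S^1), for any x^a ≥ 0 with Σ_a x^a(I - βP^a) = p. -/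
open Matrix

/-- Proposition 6.1(a.3): for `S^1` the policy selecting the top action `A` in
every state (with resource vector `G1`), the conservation law holds with
equality for every nonnegative occupancy solution:
`G_p(x) + Σ_{a<A} Σ_j g_j^{a,A}(S^1) x_j^a = G_p(S^1)`. -/
theorem stmt16 {N : Type*} [Fintype N] [DecidableEq N] {A : ℕ}
    (P : Fin (A + 1) → Matrix N N ℝ)
    (hP0 : ∀ a i j, 0 ≤ P a i j) (hP1 : ∀ a i, ∑ j, P a i j = 1)
    (β : ℝ) (hβ0 : 0 < β) (hβ1 : β < 1)
    (q : Fin (A + 1) → N → ℝ)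
    (G1 : N → ℝ)
    (hG1 : ∀ i, G1 i = q (Fin.last A) i + β * (P (Fin.last A) *ᵥ G1) i)
    (p : N → ℝ)
    (x : Fin (A + 1) → N → ℝ) (hx : ∀ a j, 0 ≤ x a j)
    (hflow : (∑ a, x a ᵥ* ((1 : Matrix N N ℝ) - β • P a)) = p) :
    (∑ a, x a ⬝ᵥ q a) +
      ∑ a ∈ Finset.univ.filter (fun a => a < Fin.last A), ∑ j,
        (q (Fin.last A) j - q a j + β * ((P (Fin.last A) - P a) *ᵥ G1) j) * x a j
    = p ⬝ᵥ G1 := by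
  have hfilter : (∑ a ∈ Finset.univ.filter (fun a => a < Fin.last A), ∑ j,
        (q (Fin.last A) j - q a j + β * ((P (Fin.last A) - P a) *ᵥ G1) j) * x a j)
      = ∑ a, ∑ j,
        (q (Fin.last A) j - q a j + β * ((P (Fin.last A) - P a) *ᵥ G1) j) * x a j := by
    rw [Finset.sum_filter]
    refine Finset.sum_congr rfl fun a _ => ?_
    by_cases h : a < Fin.last A
    · simp [h]
    · have ha : a = Fin.last A := le_antisymm (Fin.le_last a) (not_lt.mp h)
      simp [h, ha]
  have hsum : (∑ a, x a ᵥ* ((1 : Matrix N N ℝ) - β • P a)) ⬝ᵥ G1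
      = ∑ a, (x a ᵥ* ((1 : Matrix N N ℝ) - β • P a)) ⬝ᵥ G1 := by
    simp [dotProduct, Finset.sum_apply, Finset.sum_mul]
    exact Finset.sum_comm
  rw [hfilter, ← hflow, hsum, ← Finset.sum_add_distrib]
  refine Finset.sum_congr rfl fun a _ => ?_
  rw [← Matrix.dotProduct_mulVec]
  simp only [dotProduct, ← Finset.sum_add_distrib]
  refine Finset.sum_congr rfl fun j _ => ?_
  have h1 : ((1 - β • P a) *ᵥ G1) j = G1 j - β * (P a *ᵥ G1) j := by
    simp [Matrix.sub_mulVec, Matrix.smul_mulVec]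
  have h2 : ((P (Fin.last A) - P a) *ᵥ G1) j
      = (P (Fin.last A) *ᵥ G1) j - (P a *ᵥ G1) j := by
    simp [Matrix.sub_mulVec]
  rw [h1, h2, hG1 j]
  ring
end

section
/- Let S^k and S^{k+1} = T_{j_k}^{a_k, a_k - 1} S^k be consecutive policies in the downshift sequence, with the marginal-resource positivity g_{j_k}^{a_k-1,a_k}(S^{k+1}) > 0, index value m^*_k := f_{j_k}^{a_k-1,a_k}(S^{k+1})/g_{j_k}^{a_k-1,a_k}(S^{k+1}), and V_p(λ, S) := F_p(S) + λ G_p(S). Then V_p(λ, S^k) = V_p(λ, S^{k+1}) - (m^*_k - λ) g_{j_k}^{a_k-1,a_k}(S^{k+1}) x_{p j_k}^{a_k}(S^k). In particular, if x_{p j_k}^{a_k}(S^k) > 0, then V_p(λ, S^k) ≤ V_p(λ, S^{k+1}) iff λ ≤ m^*_k. -/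
open Matrix

/-- Lemma 5.4(f): for consecutive policies `S^k` (policy `σ`) and
`S^{k+1} = T_{jk}^{ak, ak-1} S^k` (policy `σ'`) in the downshift sequence, with
`g* := g_{jk}^{ak-1,ak}(S^{k+1}) > 0`, `m* := f_{jk}^{ak-1,ak}(S^{k+1}) / g*`,
and `V_p(λ,S) := F_p(S) + λ G_p(S)`:
`V_p(λ, S^k) = V_p(λ, S^{k+1}) - (m* - λ) g* x_{p,jk}^{ak}(S^k)`; in
particular, if `x_{p,jk}^{ak}(S^k) > 0`, then
`V_p(λ, S^k) ≤ V_p(λ, S^{k+1})` iff `λ ≤ m*`. -/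
theorem stmt17 {N : Type*} [Fintype N] [DecidableEq N] {A : ℕ}
    (P : Fin (A + 1) → Matrix N N ℝ)
    (hP0 : ∀ a i j, 0 ≤ P a i j) (hP1 : ∀ a i, ∑ j, P a i j = 1)
    (β : ℝ) (hβ0 : 0 < β) (hβ1 : β < 1)
    (h q : Fin (A + 1) → N → ℝ)
    (σ : N → Fin (A + 1)) (jk : N) (ak : Fin (A + 1)) (hak : ak ≠ 0)
    (hja : σ jk = ak)
    (σ' : N → Fin (A + 1)) (hσ' : σ' = Function.update σ jk (ak - 1))
    (F : N → ℝ) (hF : ∀ i, F i = h (σ i) i + β * (P (σ i) *ᵥ F) i)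
    (G : N → ℝ) (hG : ∀ i, G i = q (σ i) i + β * (P (σ i) *ᵥ G) i)
    (F' : N → ℝ) (hF' : ∀ i, F' i = h (σ' i) i + β * (P (σ' i) *ᵥ F') i)
    (G' : N → ℝ) (hG' : ∀ i, G' i = q (σ' i) i + β * (P (σ' i) *ᵥ G') i)
    (gk : ℝ)
    (hgk : gk = q ak jk - q (ak - 1) jk + β * ((P ak - P (ak - 1)) *ᵥ G') jk)
    (hgkpos : 0 < gk)
    (mk : ℝ)
    (hmk : mk = (h (ak - 1) jk - h ak jk + β * ((P (ak - 1) - P ak) *ᵥ F') jk) / gk)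
    (p : N → ℝ)
    (xk : ℝ)
    (hxk : xk = (p ᵥ* (((1 : Matrix N N ℝ) -
      β • Matrix.of (fun i j => P (σ i) i j))⁻¹)) jk)
    (lam : ℝ) :
    p ⬝ᵥ F + lam * (p ⬝ᵥ G) = (p ⬝ᵥ F' + lam * (p ⬝ᵥ G')) - (mk - lam) * gk * xk
    ∧ (0 < xk →
        (p ⬝ᵥ F + lam * (p ⬝ᵥ G) ≤ p ⬝ᵥ F' + lam * (p ⬝ᵥ G') ↔ lam ≤ mk)) := by
  classical
  set Pσ : Matrix N N ℝ := Matrix.of (fun i j => P (σ i) i j) with hPσ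
  set M : Matrix N N ℝ := (1 : Matrix N N ℝ) - β • Pσ with hMdef
  set e : N → ℝ := Pi.single jk (1 : ℝ) with he
  have hPle1 : ∀ a (i j : N), P a i j ≤ 1 := by
    intro a i j
    have h1 := hP1 a i
    have : P a i j ≤ ∑ l, P a i l :=
      Finset.single_le_sum (fun l _ => hP0 a i l) (Finset.mem_univ j)
    linarith
  have hdetne : M.det ≠ 0 := by
    apply det_ne_zero_of_sum_row_lt_diag
    intro k
    have hdiag : M k k = 1 - β * P (σ k) k k := by
      simp [hMdef, hPσ, Matrix.sub_apply, Matrix.one_apply, Matrix.smul_apply]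
    have hoff : ∀ j, j ≠ k → M k j = -(β * P (σ k) k j) := by
      intro j hj
      simp [hMdef, hPσ, Matrix.sub_apply, Matrix.one_apply, Ne.symm hj,
        Matrix.smul_apply]
    have hsum : ∑ j ∈ Finset.univ.erase k, ‖M k j‖
        = ∑ j ∈ Finset.univ.erase k, β * P (σ k) k j := by
      refine Finset.sum_congr rfl fun j hj => ?_
      rw [hoff j (Finset.ne_of_mem_erase hj), norm_neg,
        Real.norm_of_nonneg (mul_nonneg hβ0.le (hP0 _ _ _))]
    have hsum2 : ∑ j ∈ Finset.univ.erase k, β * P (σ k) k j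
        = β * (1 - P (σ k) k k) := by
      rw [← Finset.mul_sum, Finset.sum_erase_eq_sub (Finset.mem_univ k), hP1]
    have hkk : β * P (σ k) k k ≤ β :=
      (mul_le_of_le_one_right hβ0.le (hPle1 _ _ _))
    have hdpos : 0 < 1 - β * P (σ k) k k := by linarith
    rw [hsum, hsum2, hdiag, Real.norm_of_nonneg hdpos.le]
    have : 0 ≤ β * P (σ k) k k := mul_nonneg hβ0.le (hP0 _ _ _)
    nlinarith
  have hdet : IsUnit M.det := isUnit_iff_ne_zero.mpr hdetne
  have hinv : M⁻¹ * M = 1 := Matrix.nonsing_inv_mul M hdet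
  -- main computation for a generic stage-cost function r
  have main : ∀ (r : Fin (A+1) → N → ℝ) (X X' : N → ℝ),
      (∀ i, X i = r (σ i) i + β * (P (σ i) *ᵥ X) i) →
      (∀ i, X' i = r (σ' i) i + β * (P (σ' i) *ᵥ X') i) →
      p ⬝ᵥ X - p ⬝ᵥ X' =
        (r ak jk - r (ak-1) jk + β * ((P ak - P (ak-1)) *ᵥ X') jk) * xk := by
    intro r X X' hX hX'
    set c : ℝ := r ak jk - r (ak-1) jk + β * ((P ak - P (ak-1)) *ᵥ X') jk with hc
    have hMΔ : M *ᵥ (X - X') = c • e := by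
      funext i
      have hM_i : (M *ᵥ (X - X')) i
          = (X i - X' i) - β * ((P (σ i) *ᵥ X) i - (P (σ i) *ᵥ X') i) := by
        have h1 : (M *ᵥ (X - X')) i
            = (X - X') i - β * (Pσ *ᵥ (X - X')) i := by
          simp [hMdef, Matrix.sub_mulVec, Matrix.one_mulVec,
            Matrix.smul_mulVec]
        rw [h1]
        have hPσi : (Pσ *ᵥ (X - X')) i = (P (σ i) *ᵥ X) i - (P (σ i) *ᵥ X') i := by
          simp [hPσ, Matrix.mulVec, dotProduct, mul_sub,
            Finset.sum_sub_distrib]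
        rw [hPσi]
        simp
      by_cases hi : i = jk
      · subst hi
        have hσ'i : σ' i = ak - 1 := by rw [hσ']; simp
        have hXi := hX i
        have hX'i := hX' i
        rw [hja] at hXi
        rw [hσ'i] at hX'i
        have hsubmv : ((P ak - P (ak-1)) *ᵥ X') i
            = (P ak *ᵥ X') i - (P (ak-1) *ᵥ X') i := by
          simp [Matrix.sub_mulVec]
        have hei : (c • e) i = c := by simp [he]
        rw [hM_i, hei, hc, hsubmv]
        have hja' : σ i = ak := hja
        rw [hja']
        linarith
      · have hσ'i : σ' i = σ i := by rw [hσ']; simp [Function.update_of_ne hi]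
        have hXi := hX i
        have hX'i := hX' i
        rw [hσ'i] at hX'i
        have hei : (c • e) i = 0 := by simp [he, Pi.single_eq_of_ne hi]
        rw [hM_i, hei]
        linarith
    have hΔ : X - X' = M⁻¹ *ᵥ (c • e) := by
      rw [← hMΔ, Matrix.mulVec_mulVec, hinv, Matrix.one_mulVec]
    have hdp : p ⬝ᵥ X - p ⬝ᵥ X' = p ⬝ᵥ (X - X') := by
      simp [dotProduct, Finset.sum_sub_distrib, mul_sub]
    rw [hdp, hΔ, Matrix.dotProduct_mulVec]
    have hfin : (p ᵥ* M⁻¹) ⬝ᵥ (c • e) = c * (p ᵥ* M⁻¹) jk := by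
      simp [he, dotProduct, Pi.single_apply, mul_comm]
    rw [hfin, hxk]
  have hFeq := main h F F' hF hF'
  have hGeq := main q G G' hG hG'
  rw [← hgk] at hGeq
  have hgkne : gk ≠ 0 := ne_of_gt hgkpos
  have hmkgk : mk * gk
      = h (ak-1) jk - h ak jk + β * ((P (ak-1) - P ak) *ᵥ F') jk := by
    rw [hmk]; field_simp
  have hswap : ((P ak - P (ak-1)) *ᵥ F') jk = -(((P (ak-1) - P ak) *ᵥ F') jk) := by
    simp [Matrix.sub_mulVec]
  rw [hswap] at hFeq
  have hFeq' : p ⬝ᵥ F - p ⬝ᵥ F' = -(mk * gk) * xk := by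
    rw [hFeq]
    rw [show h ak jk - h (ak - 1) jk + β * -((P (ak - 1) - P ak) *ᵥ F') jk
        = -(mk * gk) by rw [hmkgk]; ring]
  have hkey : p ⬝ᵥ F + lam * (p ⬝ᵥ G)
      = (p ⬝ᵥ F' + lam * (p ⬝ᵥ G')) - (mk - lam) * gk * xk := by
    linear_combination hFeq' + lam * hGeq
  refine ⟨hkey, fun hxkpos => ?_⟩
  rw [hkey, sub_le_self_iff]
  constructor
  · intro h0
    by_contra hcon
    push_neg at hcon
    have hneg : (mk - lam) * gk * xk < 0 :=
      mul_neg_of_neg_of_pos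
        (mul_neg_of_neg_of_pos (by linarith) hgkpos) hxkpos
    linarith
  · intro hle
    exact mul_nonneg (mul_nonneg (by linarith) hgkpos.le) hxkpos.le
end
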